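/- Let Ω ⊂ ℝⁿ_* be a smooth bounded domain with closure contained in ℝⁿ_*, A a nonnegative vector in ℝⁿ, and u a smooth solution of div(x^A ∇u) = b·x^A in Ω with ∂u/∂ν = 1 on ∂Ω, where b = P(Ω)/m(Ω). Let Γ* = {x ∈ Ω : u(y) ≥ u(x) + ∇u(x)·(y−x) for all y ∈ closure(Ω), and ∇u(x) ∈ ℝⁿ_*}. Then B₁(0) ∩ ℝⁿ_* ⊆ ∇u(Γ*). -/

import Mathlib

open MeasureTheory

/-- ABP-type contact set inclusion: if `u` solves the weighted Neumann problem
`div(x^A ∇u) = b x^A` in `Ω`, `∂u/∂ν = 1` on `∂Ω`, with `b = P(Ω)/m(Ω)`, then the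
gradient image of the lower contact set (restricted to gradients in `ℝⁿ_*`) covers
`B₁ ∩ ℝⁿ_*`. -/
theorem contact_set_inclusion (n : ℕ) (A : Fin n → ℝ) (hA : ∀ i, 0 ≤ A i)
    (Rstar : Set (EuclideanSpace ℝ (Fin n)))
    (hRstar : Rstar = {x | ∀ i, 0 < A i → 0 < x i})
    (Ω : Set (EuclideanSpace ℝ (Fin n))) (hΩopen : IsOpen Ω)
    (hΩbdd : Bornology.IsBounded Ω) (hΩne : Ω.Nonempty)
    (hΩsub : closure Ω ⊆ Rstar)
    (u : EuclideanSpace ℝ (Fin n) → ℝ) (hu : ContDiff ℝ 2 u)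
    (b : ℝ)
    (hb : b = (∫ x in frontier Ω, ∏ i, |x i| ^ A i ∂(μH[(n : ℝ) - 1]))
        / (∫ x in Ω, ∏ i, |x i| ^ A i))
    -- the equation `x^{-A} div(x^A ∇u) = Σ Aᵢ u_{xᵢ}/xᵢ + Δu = b` in `Ω`
    (hPDE : ∀ x ∈ Ω,
      (∑ i, A i * gradient u x i / x i) +
      (∑ i, fderiv ℝ (fun y => gradient u y i) x (EuclideanSpace.single i 1)) = b)
    -- `ν` is the outward unit normal to `∂Ω`
    (ν : EuclideanSpace ℝ (Fin n) → EuclideanSpace ℝ (Fin n))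
    (hν : ∀ x ∈ frontier Ω, ‖ν x‖ = 1)
    (hνout : ∀ x ∈ frontier Ω, ∀ᶠ t : ℝ in nhdsWithin 0 (Set.Ioi 0), x - t • ν x ∈ Ω)
    -- the Neumann condition `∂u/∂ν = 1` on `∂Ω`
    (hNeumann : ∀ x ∈ frontier Ω, (inner ℝ (gradient u x) (ν x) : ℝ) = 1) :
    Metric.ball 0 1 ∩ Rstar ⊆
      (fun x => gradient u x) ''
        {x ∈ Ω | (∀ y ∈ closure Ω, u x + (inner ℝ (gradient u x) (y - x) : ℝ) ≤ u y)
          ∧ gradient u x ∈ Rstar} := by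
  rintro p ⟨hpball, hpR⟩
  have hpnorm : ‖p‖ < 1 := by simpa [Metric.mem_ball, dist_zero_right] using hpball
  have hud : Differentiable ℝ u := hu.differentiable two_ne_zero
  set h : EuclideanSpace ℝ (Fin n) → ℝ := fun x => u x - inner ℝ p x with hh
  have hhd : Differentiable ℝ h := hud.sub (innerSL ℝ p).differentiable
  have hK : IsCompact (closure Ω) := hΩbdd.isCompact_closure
  obtain ⟨x₀, hx₀mem, hx₀min⟩ := hK.exists_isMinOn hΩne.closure hhd.continuous.continuousOn
  have hgradfd : ∀ x v, (inner ℝ (gradient u x) v : ℝ) = fderiv ℝ u x v := fun x v =>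
    InnerProductSpace.toDual_symm_apply
  have hfdsub : fderiv ℝ h x₀ = fderiv ℝ u x₀ - innerSL ℝ p := by
    have h1 : fderiv ℝ h x₀ = fderiv ℝ u x₀ - fderiv ℝ (fun x => (innerSL ℝ p) x) x₀ :=
      fderiv_sub (hud x₀) (innerSL ℝ p).differentiableAt
    rw [h1]
    congr 1
    exact (innerSL ℝ p).fderiv
  have hx₀Ω : x₀ ∈ Ω := by
    by_contra hx₀Ω
    have hfr : x₀ ∈ frontier Ω := by
      rw [hΩopen.frontier_eq]; exact ⟨hx₀mem, hx₀Ω⟩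
    set v := ν x₀ with hv
    have hc : HasDerivAt (fun t : ℝ => x₀ - t • v) (-v) 0 := by
      have := ((hasDerivAt_id (0:ℝ)).smul_const v).const_sub x₀
      simpa using this
    have hx' : x₀ - (0:ℝ) • v = x₀ := by simp
    have hcomp : HasDerivAt (fun t : ℝ => h (x₀ - t • v)) (fderiv ℝ h x₀ (-v)) 0 := by
      have := (hhd (x₀ - (0:ℝ) • v)).hasFDerivAt.comp_hasDerivAt 0 hc
      rw [hx'] at this
      exact this
    have hipv : (inner ℝ p v : ℝ) < 1 := by
      calc (inner ℝ p v : ℝ) ≤ ‖p‖ * ‖v‖ := real_inner_le_norm p v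
        _ = ‖p‖ := by rw [hν x₀ hfr]; ring
        _ < 1 := hpnorm
    have hneg : fderiv ℝ h x₀ (-v) < 0 := by
      rw [hfdsub]
      have h1 : fderiv ℝ u x₀ v = 1 := by rw [← hgradfd]; exact hNeumann x₀ hfr
      have h2 : (fderiv ℝ u x₀ - innerSL ℝ p) (-v)
          = -(fderiv ℝ u x₀ v) + (inner ℝ p v : ℝ) := by
        simp [ContinuousLinearMap.sub_apply, innerSL_apply_apply]
      rw [h2, h1]; linarith
    have hslope := hcomp.hasDerivWithinAt (s := Set.Ioi 0)
    rw [hasDerivWithinAt_iff_tendsto_slope] at hslope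
    have hev1 : ∀ᶠ t in nhdsWithin (0:ℝ) (Set.Ioi 0 \ {0}),
        slope (fun t : ℝ => h (x₀ - t • v)) 0 t < 0 :=
      hslope.eventually_lt_const hneg
    have hdiff : Set.Ioi (0:ℝ) \ {0} = Set.Ioi 0 := by
      ext t
      simp only [Set.mem_diff, Set.mem_Ioi, Set.mem_singleton_iff]
      exact ⟨fun ht => ht.1, fun ht => ⟨ht, ne_of_gt ht⟩⟩
    rw [hdiff] at hev1
    have hev2 : ∀ᶠ t in nhdsWithin (0:ℝ) (Set.Ioi 0),
        h x₀ ≤ h (x₀ - t • v) := (hνout x₀ hfr).mono (fun t ht => hx₀min (subset_closure ht))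
    have hev3 : ∀ᶠ t in nhdsWithin (0:ℝ) (Set.Ioi 0), (0:ℝ) < t := self_mem_nhdsWithin
    obtain ⟨t, h1, h2, h3⟩ := (hev1.and (hev2.and hev3)).exists
    rw [slope_def_field] at h1
    have hq : (h (x₀ - t • v) - h (x₀ - (0:ℝ) • v)) / (t - 0) < 0 := h1
    rw [hx', sub_zero] at hq
    have := (div_neg_iff.mp hq)
    rcases this with ⟨ha, hb'⟩ | ⟨ha, hb'⟩
    · linarith
    · linarith
  have hloc : IsLocalMin h x₀ := by
    apply Filter.eventually_of_mem (Filter.mem_of_superset (hΩopen.mem_nhds hx₀Ω) subset_closure)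
    exact fun y hy => hx₀min hy
  have hfd : fderiv ℝ u x₀ = innerSL ℝ p := by
    have h0 := hloc.fderiv_eq_zero
    rw [hfdsub] at h0
    exact sub_eq_zero.mp h0
  have hgrad : gradient u x₀ = p := by
    apply ext_inner_right ℝ
    intro y
    rw [hgradfd, hfd]
    rfl
  refine ⟨x₀, ⟨hx₀Ω, fun y hy => ?_, ?_⟩, hgrad⟩
  · have h5 : u x₀ - inner ℝ p x₀ ≤ u y - inner ℝ p y := hx₀min hy
    rw [hgrad]
    have hinner : (inner ℝ p (y - x₀) : ℝ) = inner ℝ p y - inner ℝ p x₀ := inner_sub_right _ _ _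
    linarith
  · rw [hgrad]; exact hpR
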